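/- Let G be a graph and let G' be obtained from G by the following construction: V(G') = {w_v : v ∈ V(G)} ∪ {t¹_e, t²_e, b¹_e, b²_e : e ∈ E(G)} ∪ {c₁, c₂}, with edges: for each edge e = uv of G, edges w_u t¹_e, t¹_e t²_e, t²_e w_v, w_u b¹_e, b¹_e b²_e, b²_e w_v; additionally c₁ adjacent to all t-vertices, c₂ adjacent to all b-vertices, and c₁ adjacent to c₂. Then G admits a proper 3-coloring if and only if G' admits a proper 3-coloring. -/
import Mathlib


/-- Vertex set of the enhanced graph `G'`: a vertex `w_v` for each vertex `v` of `G`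
(`Sum.inl v`), four vertices `t¹_e, t²_e, b¹_e, b²_e` for each edge `e` of `G`
(`Sum.inr (Sum.inl (e, tb, i))` where `tb = false` means a `t`-vertex, `tb = true` a
`b`-vertex, and `i : Bool` distinguishes the superscripts 1/2), and two special vertices
`c₁, c₂` (`Sum.inr (Sum.inr 0)` and `Sum.inr (Sum.inr 1)`). -/
def EnhVert (V E : Type*) := V ⊕ ((E × Bool × Bool) ⊕ (Fin 2))

/-- Base relation generating the edges of the enhanced graph `G'`, given an orientation
`fst, snd` of each edge `e = (fst e, snd e)` of `G`: for each edge `e = uv`, the paths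
`w_u — t¹_e — t²_e — w_v` and `w_u — b¹_e — b²_e — w_v`; moreover `c₁` is adjacent to all
`t`-vertices, `c₂` to all `b`-vertices, and `c₁` to `c₂`. -/
def enhRel {V : Type*} (G : SimpleGraph V) (fst snd : G.edgeSet → V) :
    EnhVert V G.edgeSet → EnhVert V G.edgeSet → Prop
  | Sum.inl u, Sum.inr (Sum.inl (e, _, i)) =>
      (i = false ∧ u = fst e) ∨ (i = true ∧ u = snd e)
  | Sum.inr (Sum.inl (e, tb, i)), Sum.inr (Sum.inl (e', tb', i')) =>
      e = e' ∧ tb = tb' ∧ i ≠ i'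
  | Sum.inr (Sum.inl (_, tb, _)), Sum.inr (Sum.inr c) =>
      (tb = false ∧ c = 0) ∨ (tb = true ∧ c = 1)
  | Sum.inr (Sum.inr _), Sum.inr (Sum.inr _) => True
  | _, _ => False

/-- Coloring of the internal gadget vertices, given the colors `x, y` of the two
endpoints of the edge. -/
def gadCol (x y : Fin 3) (tb i : Bool) : Fin 3 :=
  if tb then
    (if x ≠ 0 ∧ y ≠ 2 then (if i then 2 else 0) else (if i then 0 else 2))
  else
    (if x ≠ 1 ∧ y ≠ 2 then (if i then 2 else 1) else (if i then 1 else 2))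

lemma gadCol_props : ∀ (tb : Bool) (x y : Fin 3), x ≠ y →
    gadCol x y tb false ≠ x ∧ gadCol x y tb true ≠ y ∧
    gadCol x y tb false ≠ gadCol x y tb true ∧
    (∀ i, gadCol x y false i ≠ 0) ∧ (∀ i, gadCol x y true i ≠ 1) := by
  decide

/-- The coloring of the enhanced graph induced by a coloring `c` of `G`. -/
def enhCol {V E : Type*} (c : V → Fin 3) (f s : E → V) : EnhVert V E → Fin 3
  | Sum.inl v => c v
  | Sum.inr (Sum.inl (e, tb, i)) => gadCol (c (f e)) (c (s e)) tb i
  | Sum.inr (Sum.inr k) => if k = 0 then 0 else 1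

lemma EnhVert.ne_tt {V E : Type*} (e : E) (tb : Bool) :
    (Sum.inr (Sum.inl (e, tb, false)) : EnhVert V E) ≠ Sum.inr (Sum.inl (e, tb, true)) := by
  simp

lemma EnhVert.ne_wt {V E : Type*} (u : V) (x : (E × Bool × Bool) ⊕ (Fin 2)) :
    (Sum.inl u : EnhVert V E) ≠ Sum.inr x := by simp

lemma EnhVert.ne_tc {V E : Type*} (e : E) (tb i : Bool) (k : Fin 2) :
    (Sum.inr (Sum.inl (e, tb, i)) : EnhVert V E) ≠ Sum.inr (Sum.inr k) := by simp

lemma EnhVert.ne_cc {V E : Type*} :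
    (Sum.inr (Sum.inr 0) : EnhVert V E) ≠ Sum.inr (Sum.inr 1) := by simp

lemma fin2_if (k k' : Fin 2) (h : k ≠ k') :
    (if k = 0 then (0 : Fin 3) else 1) ≠ (if k' = 0 then 0 else 1) := by
  revert h; revert k k'; decide

set_option synthInstance.maxSize 1000 in
set_option maxHeartbeats 1000000 in
lemma fin3 : ∀ a b g1 g2 t1 t2 b1 b2 : Fin 3,
    t1 ≠ a → t2 ≠ b → t1 ≠ t2 → t1 ≠ g1 → t2 ≠ g1 →
    b1 ≠ a → b2 ≠ b → b1 ≠ b2 → b1 ≠ g2 → b2 ≠ g2 → g1 ≠ g2 → a ≠ b := by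
  decide

/-- `G` admits a proper 3-coloring if and only if the enhanced graph `G'`
(obtained by the gadget construction `enhRel`) admits a proper 3-coloring. -/
theorem stmt3 {V : Type*} (G : SimpleGraph V) (fst snd : G.edgeSet → V)
    (hends : ∀ e : G.edgeSet, (e : Sym2 V) = s(fst e, snd e)) :
    G.Colorable 3 ↔ (SimpleGraph.fromRel (enhRel G fst snd)).Colorable 3 := by
  have hadjE : ∀ e : G.edgeSet, G.Adj (fst e) (snd e) := by
    intro e
    have h2 := e.2
    rw [hends e] at h2
    exact h2
  constructor
  · rintro ⟨c⟩
    refine ⟨SimpleGraph.Coloring.mk (enhCol c fst snd) ?_⟩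
    intro a b hab
    rw [SimpleGraph.fromRel_adj] at hab
    obtain ⟨hne, hrel⟩ := hab
    have key : ∀ (e : G.edgeSet) (tb : Bool),
        gadCol (c (fst e)) (c (snd e)) tb false ≠ c (fst e) ∧
        gadCol (c (fst e)) (c (snd e)) tb true ≠ c (snd e) ∧
        gadCol (c (fst e)) (c (snd e)) tb false ≠ gadCol (c (fst e)) (c (snd e)) tb true ∧
        (∀ i, gadCol (c (fst e)) (c (snd e)) false i ≠ 0) ∧
        (∀ i, gadCol (c (fst e)) (c (snd e)) true i ≠ 1) :=
      fun e tb => gadCol_props tb _ _ (c.valid (hadjE e))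
    rcases a with u | eti | k <;> rcases b with u' | eti' | k'
    · rcases hrel with h | h <;> exact absurd h (by simp [enhRel])
    · obtain ⟨e, tb, i⟩ := eti'
      have hr : (i = false ∧ u = fst e) ∨ (i = true ∧ u = snd e) := by
        rcases hrel with h | h
        · exact h
        · exact absurd h (by simp [enhRel])
      rcases hr with ⟨hi, hu⟩ | ⟨hi, hu⟩ <;> subst hi <;> subst hu <;>
        simp only [enhCol]
      · exact (key e tb).1.symm
      · exact ((key e tb).2.1).symm
    · rcases hrel with h | h <;> exact absurd h (by simp [enhRel])
    · obtain ⟨e, tb, i⟩ := eti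
      have hr : (i = false ∧ u' = fst e) ∨ (i = true ∧ u' = snd e) := by
        rcases hrel with h | h
        · exact absurd h (by simp [enhRel])
        · exact h
      rcases hr with ⟨hi, hu⟩ | ⟨hi, hu⟩ <;> subst hi <;> subst hu <;>
        simp only [enhCol]
      · exact (key e tb).1
      · exact (key e tb).2.1
    · obtain ⟨e, tb, i⟩ := eti
      obtain ⟨e', tb', i'⟩ := eti'
      have hr : e = e' ∧ tb = tb' ∧ i ≠ i' := by
        rcases hrel with h | h
        · exact h
        · obtain ⟨h1, h2, h3⟩ := h
          exact ⟨h1.symm, h2.symm, h3.symm⟩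
      obtain ⟨rfl, rfl, hii⟩ := hr
      simp only [enhCol]
      rcases i with _ | _ <;> rcases i' with _ | _
      · exact absurd rfl hii
      · exact (key e tb).2.2.1
      · exact ((key e tb).2.2.1).symm
      · exact absurd rfl hii
    · obtain ⟨e, tb, i⟩ := eti
      have hr : (tb = false ∧ k' = 0) ∨ (tb = true ∧ k' = 1) := by
        rcases hrel with h | h
        · exact h
        · exact absurd h (by simp [enhRel])
      rcases hr with ⟨rfl, rfl⟩ | ⟨rfl, rfl⟩ <;> simp only [enhCol]
      · simpa using (key e false).2.2.2.1 i
      · simpa using (key e true).2.2.2.2 i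
    · rcases hrel with h | h <;> exact absurd h (by simp [enhRel])
    · obtain ⟨e, tb, i⟩ := eti'
      have hr : (tb = false ∧ k = 0) ∨ (tb = true ∧ k = 1) := by
        rcases hrel with h | h
        · exact absurd h (by simp [enhRel])
        · exact h
      rcases hr with ⟨rfl, rfl⟩ | ⟨rfl, rfl⟩ <;> simp only [enhCol]
      · simpa using ((key e false).2.2.2.1 i).symm
      · simpa using ((key e true).2.2.2.2 i).symm
    · have hkk : k ≠ k' := fun h => hne (by rw [h])
      simp only [enhCol]
      exact fin2_if k k' hkk
  · rintro ⟨d⟩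
    refine ⟨SimpleGraph.Coloring.mk (fun v => d (Sum.inl v)) ?_⟩
    intro u v huv
    have he : s(u, v) ∈ G.edgeSet := G.mem_edgeSet.2 huv
    have hsym : s(u, v) = s(fst ⟨s(u, v), he⟩, snd ⟨s(u, v), he⟩) := hends ⟨s(u, v), he⟩
    have main : ∀ e : G.edgeSet, d (Sum.inl (fst e)) ≠ d (Sum.inl (snd e)) := by
      intro e
      have dadj : ∀ a b : EnhVert V G.edgeSet, a ≠ b →
          enhRel G fst snd a b → d a ≠ d b := fun a b h1 h2 =>
        d.valid (SimpleGraph.fromRel_adj .. |>.2 ⟨h1, Or.inl h2⟩)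
      have h1 : ∀ tb, d (Sum.inl (fst e)) ≠ d (Sum.inr (Sum.inl (e, tb, false))) :=
        fun tb => dadj _ _ (EnhVert.ne_wt _ _) (Or.inl ⟨rfl, rfl⟩)
      have h2 : ∀ tb, d (Sum.inl (snd e)) ≠ d (Sum.inr (Sum.inl (e, tb, true))) :=
        fun tb => dadj _ _ (EnhVert.ne_wt _ _) (Or.inr ⟨rfl, rfl⟩)
      have h3 : ∀ tb, d (Sum.inr (Sum.inl (e, tb, false))) ≠
          d (Sum.inr (Sum.inl (e, tb, true))) :=
        fun tb => dadj _ _ (EnhVert.ne_tt _ _) ⟨rfl, rfl, by simp⟩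
      have h4 : ∀ i, d (Sum.inr (Sum.inl (e, false, i))) ≠ d (Sum.inr (Sum.inr 0)) :=
        fun i => dadj _ _ (EnhVert.ne_tc _ _ _ _) (Or.inl ⟨rfl, rfl⟩)
      have h5 : ∀ i, d (Sum.inr (Sum.inl (e, true, i))) ≠ d (Sum.inr (Sum.inr 1)) :=
        fun i => dadj _ _ (EnhVert.ne_tc _ _ _ _) (Or.inr ⟨rfl, rfl⟩)
      have h6 : d (Sum.inr (Sum.inr 0)) ≠ d (Sum.inr (Sum.inr 1)) :=
        dadj _ _ EnhVert.ne_cc trivial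
      exact fin3 _ _ (d (Sum.inr (Sum.inr 0))) (d (Sum.inr (Sum.inr 1)))
        (d (Sum.inr (Sum.inl (e, false, false)))) (d (Sum.inr (Sum.inl (e, false, true))))
        (d (Sum.inr (Sum.inl (e, true, false)))) (d (Sum.inr (Sum.inl (e, true, true))))
        ((h1 false).symm) ((h2 false).symm) (h3 false) (h4 false) (h4 true)
        ((h1 true).symm) ((h2 true).symm) (h3 true) (h5 false) (h5 true) h6
    have := main ⟨s(u, v), he⟩
    rw [Sym2.eq_iff] at hsym
    rcases hsym with ⟨h1, h2⟩ | ⟨h1, h2⟩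
    · rw [← h1, ← h2] at this; exact this
    · rw [← h1, ← h2] at this; exact this.symm
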